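/- Under the hypotheses of the factorization theorem (P ∈ S_max^∨[Y], |P| factored, r_i defined by r_i ⊙ P_{n-i+1} = ⊖ P_{n-i}), if y ∈ S_max^∨ is distinct from all r_1,...,r_n, or |y| < |r_n|, then P̂(y) is not a balanced element of S_max. -/

import Mathlib

set_option linter.unusedVariables false

/-- The symmetrized tropical semiring `S_max(Γ)` over an ordered abelian group `Γ`:
its elements are the zero, the positive elements, the negative elements and the
(nonzero) balanced elements, each carrying a modulus in `Γ`. -/
inductive SMax (Γ : Type) : Type
  | zero : SMax Γ
  | pos : Γ → SMax Γ
  | neg : Γ → SMax Γ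
  | bal : Γ → SMax Γ
  deriving DecidableEq

namespace SMax

variable {Γ : Type} [AddCommGroup Γ] [LinearOrder Γ] [IsOrderedAddMonoid Γ]

/-- The modulus (absolute value) map, with values in the tropical semifield `T_max = Γ ∪ {⊥}`. -/
def mod : SMax Γ → WithBot Γ
  | .zero => ⊥
  | .pos a => (a : WithBot Γ)
  | .neg a => (a : WithBot Γ)
  | .bal a => (a : WithBot Γ)

/-- The negation map `⊖`. -/
def sneg : SMax Γ → SMax Γ
  | .zero => .zero
  | .pos a => .neg a
  | .neg a => .pos a
  | .bal a => .bal a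

/-- Addition `⊕` of `S_max`. -/
def add : SMax Γ → SMax Γ → SMax Γ
  | .zero, y => y
  | x, .zero => x
  | .pos a, .pos b => .pos (max a b)
  | .neg a, .neg b => .neg (max a b)
  | .pos a, .neg b => if b < a then .pos a else if a < b then .neg b else .bal a
  | .neg a, .pos b => if b < a then .neg a else if a < b then .pos b else .bal a
  | .bal a, .pos b => if a < b then .pos b else .bal a
  | .bal a, .neg b => if a < b then .neg b else .bal a
  | .pos a, .bal b => if b < a then .pos a else .bal b
  | .neg a, .bal b => if b < a then .neg a else .bal b
  | .bal a, .bal b => .bal (max a b)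

/-- Multiplication `⊙` of `S_max`. -/
def mul : SMax Γ → SMax Γ → SMax Γ
  | .zero, _ => .zero
  | _, .zero => .zero
  | .pos a, .pos b => .pos (a + b)
  | .pos a, .neg b => .neg (a + b)
  | .pos a, .bal b => .bal (a + b)
  | .neg a, .pos b => .neg (a + b)
  | .neg a, .neg b => .pos (a + b)
  | .neg a, .bal b => .bal (a + b)
  | .bal a, .pos b => .bal (a + b)
  | .bal a, .neg b => .bal (a + b)
  | .bal a, .bal b => .bal (a + b)

/-- The multiplicative unit `𝟙 = (0, ⊥)`. -/
def one : SMax Γ := .pos 0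

/-- Signed elements (`S_max^∨`): positive, negative, or zero. -/
def isSigned : SMax Γ → Prop
  | .bal _ => False
  | _ => True

/-- Balanced elements (`S_max^∘`), including zero. -/
def isBalanced : SMax Γ → Prop
  | .zero => True
  | .bal _ => True
  | _ => False

/-- The balance relation `x ∇ y`, i.e. `x ⊖ y` is balanced. -/
def nabla (x y : SMax Γ) : Prop := isBalanced (add x (sneg y))

/-- Powers in `S_max`. -/
def spow (x : SMax Γ) : ℕ → SMax Γ
  | 0 => one
  | k + 1 => mul x (spow x k)

/-- Sum of a list of elements of `S_max`. -/
def lsum : List (SMax Γ) → SMax Γ := List.foldr add .zero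

/-- The polynomial function `P̂(y) = ⊕_{k ≤ n} P_k ⊙ y^{⊙ k}` of a formal
polynomial of degree at most `n`. -/
def phat (P : ℕ → SMax Γ) (n : ℕ) (y : SMax Γ) : SMax Γ :=
  lsum ((List.range (n + 1)).map fun k => mul (P k) (spow y k))

/-- The product `(y ⊖ r₁) ⊙ ⋯ ⊙ (y ⊖ r_n)` over a list of roots. -/
def evalFactors (y : SMax Γ) : List (SMax Γ) → SMax Γ
  | [] => one
  | r :: rs => mul (add y (sneg r)) (evalFactors y rs)

/-- The formal linear polynomial `Y ⊖ r`. -/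
def linFactor (r : SMax Γ) : ℕ → SMax Γ :=
  fun k => if k = 0 then sneg r else if k = 1 then one else .zero

/-- Constant formal polynomial. -/
def constPoly (c : SMax Γ) : ℕ → SMax Γ := fun k => if k = 0 then c else .zero

/-- Cauchy product of formal polynomials over `S_max`. -/
def polyMul (P Q : ℕ → SMax Γ) : ℕ → SMax Γ :=
  fun k => lsum ((List.range (k + 1)).map fun i => mul (P i) (Q (k - i)))

/-- The formal polynomial `c ⊙ (Y ⊖ r₁) ⋯ (Y ⊖ r_n)`. -/
def prodLin (c : SMax Γ) : List (SMax Γ) → ℕ → SMax Γ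
  | [] => constPoly c
  | r :: rs => polyMul (linFactor r) (prodLin c rs)

/-- Polynomial function of a tropical polynomial over `T_max = WithBot Γ`. -/
def tphat (Q : ℕ → WithBot Γ) (n : ℕ) (x : WithBot Γ) : WithBot Γ :=
  (Finset.range (n + 1)).sup fun k => Q k + k • x

/-- `a` is a root of the (finitely supported) formal polynomial `P`, i.e. `P̂(a) ∇ 0`. -/
def IsRoot (P : ℕ → SMax Γ) (a : SMax Γ) : Prop :=
  ∃ N, (∀ k, N < k → P k = .zero) ∧ nabla (phat P N a) .zero

/-- The coefficientwise balance relation `λ P ∇ (Y ⊖ a) Q`. -/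
def balFactor (a lam : SMax Γ) (P Q : ℕ → SMax Γ) : Prop :=
  (∀ k, 1 ≤ k → nabla (mul lam (P k)) (add (Q (k - 1)) (mul (sneg a) (Q k)))) ∧
  nabla (mul lam (P 0)) (mul (sneg a) (Q 0))

/-- The Baker–Lorscheid multiplicity of `a` as a root of `P` is at least `m`:
there is a chain of length `m` of divisions by `(Y ⊖ a)` up to balance, with
tangible multipliers and signed quotients. -/
def MultGe (a : SMax Γ) : ℕ → (ℕ → SMax Γ) → Prop
  | 0, _ => True
  | m + 1, P => IsRoot P a ∧ ∃ (lam : SMax Γ) (Q : ℕ → SMax Γ),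
      isSigned lam ∧ lam ≠ .zero ∧ (∀ k, isSigned (Q k)) ∧
      (∃ N, ∀ k, N < k → Q k = .zero) ∧ balFactor a lam P Q ∧ MultGe a m Q

/-- The Baker–Lorscheid multiplicity of `a` as a root of `P` equals `m`. -/
def MultEq (a : SMax Γ) (P : ℕ → SMax Γ) (m : ℕ) : Prop :=
  MultGe a m P ∧ ¬ MultGe a (m + 1) P

/-- The number of sign changes in the (nonzero) coefficients of a formal polynomial. -/
noncomputable def signChanges (Q : ℕ → SMax Γ) : ℕ :=
  Set.ncard {i : ℕ | ∃ k, 1 ≤ k ∧ Q i ≠ .zero ∧ Q i = sneg (Q (i + k)) ∧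
    ∀ j, i < j → j < i + k → Q j = .zero}

end SMax

namespace SMax

variable {Γ : Type} [AddCommGroup Γ] [LinearOrder Γ] [IsOrderedAddMonoid Γ]

set_option linter.unusedSectionVars false

lemma mod_eq_bot_iff (x : SMax Γ) : mod x = ⊥ ↔ x = zero := by
  cases x <;> simp [mod]

lemma mod_mul (x y : SMax Γ) : mod (mul x y) = mod x + mod y := by
  cases x <;> cases y <;> simp [mul, mod]

lemma mod_sneg (x : SMax Γ) : mod (sneg x) = mod x := by
  cases x <;> rfl

lemma mul_one' (x : SMax Γ) : mul x one = x := by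
  cases x <;> simp [mul, one]

lemma mul_zero' (x : SMax Γ) : mul x zero = zero := by
  cases x <;> rfl

lemma add_zero' (x : SMax Γ) : add x zero = x := by
  cases x <;> rfl

lemma mul_comm' (x y : SMax Γ) : mul x y = mul y x := by
  cases x <;> cases y <;> simp [mul, add_comm]

lemma mul_assoc' (x y z : SMax Γ) : mul (mul x y) z = mul x (mul y z) := by
  cases x <;> cases y <;> cases z <;> simp [mul, add_assoc]

lemma sneg_mul (x y : SMax Γ) : mul (sneg x) y = sneg (mul x y) := by
  cases x <;> cases y <;> rfl

lemma sneg_sneg' (x : SMax Γ) : sneg (sneg x) = x := by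
  cases x <;> rfl

lemma isSigned_mul {x y : SMax Γ} (hx : isSigned x) (hy : isSigned y) :
    isSigned (mul x y) := by
  cases x <;> cases y <;> simp_all [mul, isSigned]

lemma mul_ne_zero' {x y : SMax Γ} (hx : x ≠ zero) (hy : y ≠ zero) :
    mul x y ≠ zero := by
  cases x <;> cases y <;> simp_all [mul]

lemma not_balanced {x : SMax Γ} (hx : isSigned x) (h0 : x ≠ zero) :
    ¬ isBalanced x := by
  cases x <;> simp_all [isSigned, isBalanced]

lemma mod_add_le (x y : SMax Γ) : mod (add x y) ≤ max (mod x) (mod y) := by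
  cases x <;> cases y <;> simp only [add] <;> (try split_ifs) <;>
    simp_all [mod, le_max_iff, le_of_lt]

lemma add_self' {x : SMax Γ} (hx : isSigned x) : add x x = x := by
  cases x <;> simp_all [add, isSigned]

lemma add_dom {s x : SMax Γ} (hs : isSigned s) (h : mod x < mod s) :
    add s x = s ∧ add x s = s := by
  cases s <;> cases x <;>
    simp_all [add, mod, isSigned, WithBot.coe_lt_coe] <;> exact le_of_lt h

lemma signed_eq_sneg {x y : SMax Γ} (hx : isSigned x) (hy : isSigned y)
    (hm : mod x = mod y) (hxy : x ≠ y) : x = sneg y := by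
  cases x <;> cases y <;> simp_all [mod, sneg, isSigned]

lemma mod_lsum_lt {l : List (SMax Γ)} {b : WithBot Γ} (hb : ⊥ < b)
    (h : ∀ x ∈ l, mod x < b) : mod (lsum l) < b := by
  induction l with
  | nil => simpa [lsum, mod]
  | cons x t ih =>
      have h1 : mod x < b := h x List.mem_cons_self
      have h2 : mod (lsum t) < b := ih fun z hz => h z (List.mem_cons_of_mem _ hz)
      have := mod_add_le x (lsum t)
      calc mod (lsum (x :: t)) = mod (add x (lsum t)) := rfl
        _ ≤ max (mod x) (mod (lsum t)) := mod_add_le _ _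
        _ < b := max_lt h1 h2

lemma lsum_eq {l : List (SMax Γ)} {s : SMax Γ} (hs : isSigned s) (h0 : s ≠ zero)
    (hmem : s ∈ l) (hdom : ∀ x ∈ l, x = s ∨ mod x < mod s) : lsum l = s := by
  induction l with
  | nil => simp at hmem
  | cons x t ih =>
      have hlx : lsum (x :: t) = add x (lsum t) := rfl
      by_cases hst : s ∈ t
      · have ht : lsum t = s := ih hst fun z hz => hdom z (List.mem_cons_of_mem _ hz)
        rcases hdom x List.mem_cons_self with hx | hx
        · rw [hlx, ht, hx, add_self' hs]
        · rw [hlx, ht, (add_dom hs hx).2]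
      · have hx : x = s := by
          rcases List.mem_cons.mp hmem with h | h
          · exact h.symm
          · exact absurd h hst
        have hb : ⊥ < mod s := by
          rcases lt_or_eq_of_le (bot_le : ⊥ ≤ mod s) with h | h
          · exact h
          · exact absurd ((mod_eq_bot_iff s).mp h.symm) h0
        have ht : mod (lsum t) < mod s := by
          refine mod_lsum_lt hb fun z hz => ?_
          rcases hdom z (List.mem_cons_of_mem _ hz) with h | h
          · exact absurd (h ▸ hz) hst
          · exact h
        rw [hlx, hx, (add_dom hs ht).1]

lemma isSigned_spow {y : SMax Γ} (hy : isSigned y) (k : ℕ) : isSigned (spow y k) := by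
  induction k with
  | zero => trivial
  | succ k ih => exact isSigned_mul hy ih

lemma spow_ne_zero {y : SMax Γ} (hy : y ≠ zero) (k : ℕ) : spow y k ≠ zero := by
  induction k with
  | zero => simp [spow, one]
  | succ k ih => exact mul_ne_zero' hy ih

lemma mod_spow {y : SMax Γ} {c : Γ} (hc : mod y = (c : WithBot Γ)) (k : ℕ) :
    mod (spow y k) = ((k • c : Γ) : WithBot Γ) := by
  induction k with
  | zero => simp [spow, one, mod]
  | succ k ih =>
      rw [spow, mod_mul, hc, ih, ← WithBot.coe_add, succ_nsmul]
      norm_num [add_comm]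

lemma nsmul_lt_nsmul' {c d : Γ} (h : c < d) {k : ℕ} (hk : 1 ≤ k) : k • c < k • d := by
  induction k with
  | zero => omega
  | succ k ih =>
      rcases Nat.eq_or_lt_of_le hk with h1 | h1
      · simpa [← h1] using h
      · have := ih (by omega)
        rw [succ_nsmul, succ_nsmul]
        exact add_lt_add this h

lemma nsmul_le_nsmul' {c d : Γ} (h : c ≤ d) (k : ℕ) : k • c ≤ k • d := by
  induction k with
  | zero => simp
  | succ k ih => rw [succ_nsmul, succ_nsmul]; exact add_le_add ih h

end SMax
namespace SMax

variable {Γ : Type} [AddCommGroup Γ] [LinearOrder Γ] [IsOrderedAddMonoid Γ]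

lemma mod_eq_coe {x : SMax Γ} (hx : x ≠ zero) :
    mod x = (((mod x).unbotD 0 : Γ) : WithBot Γ) := by
  cases x <;> simp_all [mod]

lemma bot_lt_mod {x : SMax Γ} (hx : x ≠ zero) : ⊥ < mod x := by
  cases x <;> simp_all [mod]

lemma spow_zero_eq {k : ℕ} (hk : 1 ≤ k) : spow (SMax.zero : SMax Γ) k = SMax.zero := by
  cases k with
  | zero => omega
  | succ k => simp [SMax.spow, SMax.mul]

end SMax
namespace SMax
lemma zero_mul' {Γ : Type} [AddCommGroup Γ] [LinearOrder Γ] [IsOrderedAddMonoid Γ] (x : SMax Γ) :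
    mul (SMax.zero : SMax Γ) x = SMax.zero := by
  cases x <;> rfl
end SMax

set_option maxHeartbeats 1000000 in
/-- Under the hypotheses of the factorization theorem (signed coefficients,
`|P|` factored, the `r_i` defined by `r_i ⊙ P_{n-i+1} = ⊖ P_{n-i}`): if `y` is
signed and distinct from all the `r_i`, or `|y| < |r_n|`, then `P̂(y)` is not a
balanced element of `S_max`. -/
theorem smax_not_balanced_outside_roots {Γ : Type}
    [AddCommGroup Γ] [LinearOrder Γ] [IsOrderedAddMonoid Γ]
    (hdiv : ∀ (g : Γ) (k : ℕ), 0 < k → ∃ h : Γ, k • h = g)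
    (P : ℕ → SMax Γ) (m n : ℕ) (hmn : m ≤ n)
    (hsigned : ∀ k, SMax.isSigned (P k))
    (hsupp : ∀ k, P k ≠ SMax.zero ↔ m ≤ k ∧ k ≤ n)
    (hconc : ∀ k, m < k → k < n →
      SMax.mod (P (k + 1)) + SMax.mod (P (k - 1))
        ≤ SMax.mod (P k) + SMax.mod (P k))
    (r : ℕ → SMax Γ)
    (hr1 : ∀ i, 1 ≤ i → i ≤ n - m →
      SMax.isSigned (r i) ∧ SMax.mul (r i) (P (n - i + 1)) = SMax.sneg (P (n - i)))
    (hr2 : ∀ i, n - m < i → i ≤ n → r i = SMax.zero)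
    (y : SMax Γ)
    (hy : (SMax.isSigned y ∧ ∀ i, 1 ≤ i → i ≤ n → y ≠ r i) ∨
      SMax.mod y < SMax.mod (r n)) :
    ¬ SMax.isBalanced (SMax.phat P n y) := by
  classical
  set t : ℕ → SMax Γ := fun k => SMax.mul (P k) (SMax.spow y k) with htdef
  have htk : ∀ k, t k = SMax.mul (P k) (SMax.spow y k) := fun _ => rfl
  have hphat : SMax.phat P n y = SMax.lsum ((List.range (n + 1)).map t) := rfl
  have hPnz : ∀ k, m ≤ k → k ≤ n → P k ≠ SMax.zero := fun k h1 h2 => (hsupp k).mpr ⟨h1, h2⟩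
  have hPz : ∀ k, k < m → P k = SMax.zero := by
    intro k hk
    by_contra h
    exact absurd ((hsupp k).mp h).1 (by omega)
  set p : ℕ → Γ := fun k => (SMax.mod (P k)).unbotD 0 with hpdef
  have hp : ∀ k, m ≤ k → k ≤ n → SMax.mod (P k) = ((p k : Γ) : WithBot Γ) :=
    fun k h1 h2 => SMax.mod_eq_coe (hPnz k h1 h2)
  set d : ℕ → Γ := fun k => p k - p (k + 1) with hddef
  have hdk : ∀ k, d k = p k - p (k + 1) := fun _ => rfl
  have hd : ∀ k, m ≤ k → k < n →
      SMax.mod (r (n - k)) = ((d k : Γ) : WithBot Γ) ∧ SMax.isSigned (r (n - k)) ∧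
      SMax.mul (r (n - k)) (P (k + 1)) = SMax.sneg (P k) := by
    intro k h1 h2
    obtain ⟨hsr, hmr⟩ := hr1 (n - k) (by omega) (by omega)
    have e1 : n - (n - k) + 1 = k + 1 := by omega
    have e2 : n - (n - k) = k := by omega
    rw [e1, e2] at hmr
    refine ⟨?_, hsr, hmr⟩
    have hmm := congrArg SMax.mod hmr
    rw [SMax.mod_mul, SMax.mod_sneg, hp k h1 (by omega), hp (k + 1) (by omega) (by omega)] at hmm
    cases hrm : SMax.mod (r (n - k)) with
    | bot => rw [hrm] at hmm; simp at hmm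
    | coe e =>
        rw [hrm, ← WithBot.coe_add, WithBot.coe_inj] at hmm
        have he : e = d k := by rw [hdk]; exact eq_sub_of_add_eq hmm
        rw [he]
  have hmono : ∀ j, m ≤ j → ∀ k, j ≤ k → k < n → d j ≤ d k := by
    intro j hj k
    induction k with
    | zero =>
        intro h1 h2
        have hj0 : j = 0 := by omega
        rw [hj0]
    | succ k ih =>
        intro h1 h2
        rcases Nat.eq_or_lt_of_le h1 with h | h
        · rw [h]
        · have h3 : d j ≤ d k := ih (by omega) (by omega)
          have hc := hconc (k + 1) (by omega) (by omega)
          simp only [Nat.add_sub_cancel] at hc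
          rw [hp (k + 1 + 1) (by omega) (by omega), hp k (by omega) (by omega),
            hp (k + 1) (by omega) (by omega), ← WithBot.coe_add, ← WithBot.coe_add,
            WithBot.coe_le_coe] at hc
          have h4 : d k ≤ d (k + 1) := by
            rw [hdk, hdk, sub_le_sub_iff]
            rw [add_comm (p k)]
            exact hc
          exact le_trans h3 h4
  have hfin : ∀ s : SMax Γ, SMax.isSigned s → s ≠ SMax.zero →
      s ∈ (List.range (n + 1)).map t →
      (∀ x ∈ (List.range (n + 1)).map t, x = s ∨ SMax.mod x < SMax.mod s) →
      ¬ SMax.isBalanced (SMax.phat P n y) := by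
    intro s h1 h2 h3 h4
    rw [hphat, SMax.lsum_eq h1 h2 h3 h4]
    exact SMax.not_balanced h1 h2
  have ht0 : t 0 = P 0 := SMax.mul_one' _
  -- the "y = zero with m = 0" and "small y" scenarios share the shape s = P 0
  rcases hy with ⟨hys, hyne⟩ | hylt
  · by_cases hyz : y = SMax.zero
    · -- y = zero
      have hm0 : m = 0 := by
        by_contra hm
        have hn1 : 1 ≤ n := by omega
        have hrn : r n = SMax.zero := hr2 n (by omega) le_rfl
        exact (hyne n hn1 le_rfl) (by rw [hyz, hrn])
      refine hfin (P 0) (hsigned 0) (hPnz 0 (by omega) (by omega)) ?_ ?_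
      · exact List.mem_map.mpr ⟨0, List.mem_range.mpr (by omega), ht0⟩
      · intro x hx
        obtain ⟨k, hkr, rfl⟩ := List.mem_map.mp hx
        rcases Nat.eq_zero_or_pos k with hk0 | hk1
        · subst hk0; exact Or.inl ht0
        · right
          have : t k = SMax.zero := by
            rw [htk, hyz, SMax.spow_zero_eq hk1, SMax.mul_zero']
          rw [this]
          exact SMax.bot_lt_mod (hPnz 0 (by omega) (by omega))
    · -- y signed and nonzero
      obtain ⟨c, hc⟩ : ∃ c : Γ, SMax.mod y = (c : WithBot Γ) := ⟨_, SMax.mod_eq_coe hyz⟩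
      have hmodt : ∀ k, m ≤ k → k ≤ n →
          SMax.mod (t k) = ((p k + k • c : Γ) : WithBot Γ) := by
        intro k h1 h2
        rw [htk, SMax.mod_mul, hp k h1 h2, SMax.mod_spow hc, ← WithBot.coe_add]
      have hex : ∃ k, m ≤ k ∧ k ≤ n ∧ (k < n → c < d k) := ⟨n, hmn, le_rfl, by omega⟩
      obtain ⟨hK1, hK2, hK3⟩ := Nat.find_spec hex
      set K := Nat.find hex with hKdef
      have hKmin : ∀ k, m ≤ k → k < K → d k ≤ c := by
        intro k h1 h2
        have hh := Nat.find_min hex h2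
        push_neg at hh
        exact (hh h1 (by omega)).2
      have hCup : ∀ k, K ≤ k → k ≤ n → SMax.mod (t k) ≤ SMax.mod (t K) ∧
          (K < k → SMax.mod (t k) < SMax.mod (t K)) := by
        intro k hk
        induction k, hk using Nat.le_induction with
        | base => intro _; exact ⟨le_rfl, by omega⟩
        | succ k hk ih =>
            intro hk1
            have ih' := ih (by omega)
            have hstep : SMax.mod (t (k + 1)) < SMax.mod (t k) := by
              rw [hmodt (k + 1) (by omega) hk1, hmodt k (by omega) (by omega),
                WithBot.coe_lt_coe]
              have hcd : c < d k := by
                rcases Nat.eq_or_lt_of_le hk with h | h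
                · rw [← h]; exact hK3 (by omega)
                · exact lt_of_lt_of_le (hK3 (by omega)) (hmono K hK1 k (by omega) (by omega))
              have h7 : c + p (k + 1) < p k := by
                have h8 := hcd
                rw [hdk] at h8
                exact lt_sub_iff_add_lt.mp h8
              calc p (k + 1) + (k + 1) • c = c + p (k + 1) + k • c := by
                    rw [succ_nsmul]; abel
                _ < p k + k • c := add_lt_add_left h7 _
            exact ⟨le_of_lt (lt_of_lt_of_le hstep ih'.1),
              fun _ => lt_of_lt_of_le hstep ih'.1⟩
      have hClow : ∀ j, j ≤ K - m →
          (t (K - j) = t K ∨ SMax.mod (t (K - j)) < SMax.mod (t K)) ∧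
          SMax.mod (t (K - j)) ≤ SMax.mod (t K) := by
        intro j
        induction j with
        | zero => intro _; simp
        | succ j ih =>
            intro hj
            obtain ⟨ih1, ih2⟩ := ih (by omega)
            have hk1 : K - (j + 1) + 1 = K - j := by omega
            have hkm : m ≤ K - (j + 1) := by omega
            have hkK : K - (j + 1) < K := by omega
            have hkn : K - (j + 1) < n := by omega
            have hdc : d (K - (j + 1)) ≤ c := hKmin _ hkm hkK
            rcases lt_or_eq_of_le hdc with hlt | heq
            · have hh : SMax.mod (t (K - (j + 1))) < SMax.mod (t (K - (j + 1) + 1)) := by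
                rw [hmodt _ hkm (by omega), hmodt _ (by omega) (by omega),
                  WithBot.coe_lt_coe]
                have h7 : p (K - (j + 1)) < c + p (K - (j + 1) + 1) := by
                  have h8 := hlt
                  rw [hdk] at h8
                  exact sub_lt_iff_lt_add.mp h8
                calc p (K - (j + 1)) + (K - (j + 1)) • c
                      < (c + p (K - (j + 1) + 1)) + (K - (j + 1)) • c :=
                        add_lt_add_left h7 _
                  _ = p (K - (j + 1) + 1) + (K - (j + 1) + 1) • c := by
                        rw [succ_nsmul]; abel
              rw [hk1] at hh
              exact ⟨Or.inr (lt_of_lt_of_le hh ih2), le_of_lt (lt_of_lt_of_le hh ih2)⟩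
            · obtain ⟨hrm, hrs, hre⟩ := hd _ hkm hkn
              have hrne : r (n - (K - (j + 1))) ≠ SMax.zero := by
                intro h; rw [h] at hrm; simp [SMax.mod] at hrm
              have hyner : y ≠ r (n - (K - (j + 1))) := hyne _ (by omega) (by omega)
              have hmeq : SMax.mod y = SMax.mod (r (n - (K - (j + 1)))) := by
                rw [hc, hrm, heq]
              have hysneg : y = SMax.sneg (r (n - (K - (j + 1)))) :=
                SMax.signed_eq_sneg hys hrs hmeq hyner
              have hteq : t (K - (j + 1)) = t (K - (j + 1) + 1) := by
                rw [htk, htk]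
                show SMax.mul (P (K - (j + 1))) (SMax.spow y (K - (j + 1))) =
                  SMax.mul (P (K - (j + 1) + 1))
                    (SMax.mul y (SMax.spow y (K - (j + 1))))
                rw [← SMax.mul_assoc', SMax.mul_comm' (P (K - (j + 1) + 1)) y, hysneg,
                  SMax.sneg_mul, hre, SMax.sneg_sneg']
              rw [hk1] at hteq
              rw [hteq]
              exact ⟨ih1, ih2⟩
      have hts : SMax.isSigned (t K) := by
        rw [htk]; exact SMax.isSigned_mul (hsigned K) (SMax.isSigned_spow hys K)
      have htnz : t K ≠ SMax.zero := by
        rw [htk]; exact SMax.mul_ne_zero' (hPnz K hK1 hK2) (SMax.spow_ne_zero hyz K)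
      refine hfin (t K) hts htnz ?_ ?_
      · exact List.mem_map.mpr ⟨K, List.mem_range.mpr (by omega), rfl⟩
      · intro x hx
        obtain ⟨k, hkr, rfl⟩ := List.mem_map.mp hx
        have hkn : k ≤ n := by
          have := List.mem_range.mp hkr; omega
        rcases lt_or_ge k m with hkm | hkm
        · right
          have hz : t k = SMax.zero := by rw [htk, hPz k hkm]; exact SMax.zero_mul' _
          rw [hz]
          exact SMax.bot_lt_mod htnz
        · rcases le_or_gt k K with hkK | hkK
          · have hh := hClow (K - k) (by omega)
            rw [show K - (K - k) = k by omega] at hh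
            exact hh.1
          · exact Or.inr ((hCup k (by omega) hkn).2 hkK)
  · -- |y| < |r n|
    by_cases hn0 : n = 0
    · have hm0 : m = 0 := by omega
      subst hn0
      refine hfin (P 0) (hsigned 0) (hPnz 0 (by omega) (by omega)) ?_ ?_
      · exact List.mem_map.mpr ⟨0, List.mem_range.mpr (by omega), ht0⟩
      · intro x hx
        obtain ⟨k, hkr, rfl⟩ := List.mem_map.mp hx
        have hk0 : k = 0 := by have := List.mem_range.mp hkr; omega
        subst hk0
        exact Or.inl ht0
    · have hn1 : 1 ≤ n := by omega
      have hrn_ne : r n ≠ SMax.zero := by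
        intro h
        rw [h] at hylt
        exact absurd hylt (by simp [SMax.mod])
      have hm0 : m = 0 := by
        by_contra hm
        exact hrn_ne (hr2 n (by omega) le_rfl)
      obtain ⟨hrm, hrs, hre⟩ := hd 0 (by omega) (by omega)
      rw [Nat.sub_zero] at hrm
      have hclaim : ∀ k, k ≤ n → p k + k • d 0 ≤ p 0 := by
        intro k
        induction k with
        | zero => intro _; simp
        | succ k ih =>
            intro hk
            have h1 := ih (by omega)
            have h2 : d 0 ≤ d k := hmono 0 (by omega) k (by omega) (by omega)
            have h3 := hdk k
            calc p (k + 1) + (k + 1) • d 0 = (p (k + 1) + d 0) + k • d 0 := by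
                  rw [succ_nsmul]; abel
              _ ≤ (p (k + 1) + d k) + k • d 0 :=
                  add_le_add_left (add_le_add_right h2 _) _
              _ = p k + k • d 0 := by rw [h3]; abel
              _ ≤ p 0 := h1
      refine hfin (P 0) (hsigned 0) (hPnz 0 (by omega) (by omega)) ?_ ?_
      · exact List.mem_map.mpr ⟨0, List.mem_range.mpr (by omega), ht0⟩
      · intro x hx
        obtain ⟨k, hkr, rfl⟩ := List.mem_map.mp hx
        have hkn : k ≤ n := by have := List.mem_range.mp hkr; omega
        rcases Nat.eq_zero_or_pos k with hk0 | hk1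
        · subst hk0
          exact Or.inl ht0
        · right
          by_cases hyz : y = SMax.zero
          · have hz : t k = SMax.zero := by
              rw [htk, hyz, SMax.spow_zero_eq hk1, SMax.mul_zero']
            rw [hz]
            exact SMax.bot_lt_mod (hPnz 0 (by omega) (by omega))
          · obtain ⟨c, hc⟩ : ∃ c : Γ, SMax.mod y = (c : WithBot Γ) :=
              ⟨_, SMax.mod_eq_coe hyz⟩
            have hcc : c < d 0 := by
              rw [hc, hrm, WithBot.coe_lt_coe] at hylt
              exact hylt
            have hmt : SMax.mod (t k) = ((p k + k • c : Γ) : WithBot Γ) := by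
              rw [htk, SMax.mod_mul, hp k (by omega) hkn, SMax.mod_spow hc, ← WithBot.coe_add]
            rw [hmt, hp 0 (by omega) (by omega), WithBot.coe_lt_coe]
            have h5 := hclaim k hkn
            have h6 : k • c < k • d 0 := SMax.nsmul_lt_nsmul' hcc hk1
            exact lt_of_lt_of_le (add_lt_add_right h6 _) h5
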